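/- Let f : X^n → ℝ be a function of databases with sensitivity Δ(f) = max over neighboring databases D ∼ D' of |f(D) − f(D')|, where databases are neighboring if they differ in at most one data record. For ε > 0, the Laplace mechanism, which on input D outputs f(D) + ν with ν drawn from the Laplace distribution Lap(Δ(f)/ε), is ε-differentially private: for every pair of neighboring databases D, D' and every measurable set S ⊆ ℝ, Pr[f(D) + ν ∈ S] ≤ e^ε · Pr[f(D') + ν ∈ S]. -/

import Mathlib

open MeasureTheory

/-- Two databases `D, D' : Fin n → X` are neighbors if they differ in at most
one data record. -/
def NeighborDB {X : Type*} {n : ℕ} (D D' : Fin n → X) : Prop :=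
  ∃ i : Fin n, ∀ j : Fin n, j ≠ i → D j = D' j

/-- The sensitivity of `f`, `Δ(f) = max_{D ∼ D'} |f D − f D'|` over neighboring
databases. -/
noncomputable def sensitivity {X : Type*} {n : ℕ} (f : (Fin n → X) → ℝ) : ℝ :=
  sSup {x : ℝ | ∃ D D' : Fin n → X, NeighborDB D D' ∧ x = |f D - f D'|}

/-- The Laplace distribution `Lap(b)` centered at `0`, with density
`(1/(2b))·exp(−|x|/b)` with respect to Lebesgue measure. -/
noncomputable def laplace (b : ℝ) : Measure ℝ :=
  volume.withDensity fun x => ENNReal.ofReal ((1 / (2 * b)) * Real.exp (-|x| / b))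

/-- The Laplace mechanism for `f`, which on input `D` outputs `f(D) + ν` with
`ν ∼ Lap(Δ(f)/ε)`. -/
noncomputable def laplaceMechanism {X : Type*} {n : ℕ} (f : (Fin n → X) → ℝ) (ε : ℝ)
    (D : Fin n → X) : Measure ℝ :=
  (laplace (sensitivity f / ε)).map fun ν => f D + ν

lemma laplace_density_measurable (b : ℝ) :
    Measurable fun x : ℝ => ENNReal.ofReal ((1 / (2 * b)) * Real.exp (-|x| / b)) := by
  fun_prop

/-- The translated Laplace measure as a set-lintegral. -/
lemma laplace_map_apply (b c : ℝ) (S : Set ℝ) (hS : MeasurableSet S) :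
    ((laplace b).map fun ν => c + ν) S
      = ∫⁻ x in S, ENNReal.ofReal ((1 / (2 * b)) * Real.exp (-|x - c| / b)) := by
  set g : ℝ → ENNReal := fun x => ENNReal.ofReal ((1 / (2 * b)) * Real.exp (-|x| / b)) with hg
  have hgm : Measurable g := laplace_density_measurable b
  have hmap : ((laplace b).map fun ν => c + ν) S = laplace b ((fun ν => c + ν) ⁻¹' S) :=
    Measure.map_apply (measurable_const_add c) hS
  rw [hmap, laplace, withDensity_apply _ (hS.preimage (measurable_const_add c))]
  have h1 : ∫⁻ x in (fun ν => c + ν) ⁻¹' S, g x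
      = ∫⁻ x, ((fun ν => c + ν) ⁻¹' S).indicator g x := by
    rw [lintegral_indicator (hS.preimage (measurable_const_add c)) _]
  have h2 : ∀ x, ((fun ν => c + ν) ⁻¹' S).indicator g x
      = (S.indicator fun y => g (y - c)) (c + x) := by
    intro x
    simp only [Set.indicator, Set.mem_preimage, add_sub_cancel_left]
    rfl
  have h3 : ∫⁻ x, (S.indicator fun y => g (y - c)) (c + x)
      = ∫⁻ x, (S.indicator fun y => g (y - c)) x :=
    lintegral_add_left_eq_self (S.indicator fun y => g (y - c)) c
  calc ∫⁻ x in (fun ν => c + ν) ⁻¹' S, g x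
      = ∫⁻ x, (S.indicator fun y => g (y - c)) (c + x) := by
        rw [h1]; exact lintegral_congr h2
    _ = ∫⁻ x, (S.indicator fun y => g (y - c)) x := h3
    _ = ∫⁻ x in S, g (x - c) := by rw [lintegral_indicator hS _]

lemma sensitivity_nonneg {X : Type*} {n : ℕ} (f : (Fin n → X) → ℝ)
    (D D' : Fin n → X) (hDD' : NeighborDB D D') : 0 ≤ sensitivity f := by
  by_cases hbdd : BddAbove {x : ℝ | ∃ D D' : Fin n → X, NeighborDB D D' ∧ x = |f D - f D'|}
  · have hmem : |f D - f D'| ∈ {x : ℝ | ∃ D D' : Fin n → X, NeighborDB D D' ∧ x = |f D - f D'|} :=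
      ⟨D, D', hDD', rfl⟩
    exact le_trans (abs_nonneg _) (le_csSup hbdd hmem)
  · rw [sensitivity, Real.sSup_of_not_bddAbove hbdd]

/-- The Laplace mechanism is `ε`-differentially private: for every `ε > 0`,
every pair of neighboring databases `D, D'`, and every measurable `S ⊆ ℝ`,
`Pr[f(D) + ν ∈ S] ≤ e^ε · Pr[f(D') + ν ∈ S]` where `ν ∼ Lap(Δ(f)/ε)`. -/
theorem laplaceMechanism_dp {X : Type*} {n : ℕ} (f : (Fin n → X) → ℝ)
    (ε : ℝ) (hε : 0 < ε)
    (D D' : Fin n → X) (hDD' : NeighborDB D D')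
    (S : Set ℝ) (hS : MeasurableSet S) :
    laplaceMechanism f ε D S ≤ ENNReal.ofReal (Real.exp ε) * laplaceMechanism f ε D' S := by
  set Δ : ℝ := sensitivity f with hΔ
  have hΔ0 : 0 ≤ Δ := sensitivity_nonneg f D D' hDD'
  set b : ℝ := Δ / ε with hb
  rcases eq_or_lt_of_le hΔ0 with hΔz | hΔpos
  · -- Δ = 0, b = 0, the laplace measure is the zero measure
    have hbz : b = 0 := by rw [hb, ← hΔz, zero_div]
    have hzero : laplace b = 0 := by
      rw [laplace, hbz]
      have h0 : (fun x : ℝ => ENNReal.ofReal ((1 / (2 * 0)) * Real.exp (-|x| / 0)))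
          = fun _ => 0 := by
        funext x; simp
      rw [h0]
      exact withDensity_zero
    have h1 : laplaceMechanism f ε D S = 0 := by
      rw [laplaceMechanism, ← hΔ, ← hb, hzero, Measure.map_zero]; rfl
    rw [h1]; exact zero_le
  · -- Δ > 0, so the defining set is bounded above and the key bound holds
    have hbpos : 0 < b := div_pos hΔpos hε
    have hbdd : BddAbove {x : ℝ | ∃ D D' : Fin n → X, NeighborDB D D' ∧ x = |f D - f D'|} := by
      by_contra hn
      rw [hΔ, sensitivity, Real.sSup_of_not_bddAbove hn] at hΔpos
      exact lt_irrefl 0 hΔpos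
    have hkey : |f D - f D'| ≤ Δ := le_csSup hbdd ⟨D, D', hDD', rfl⟩
    have hL : laplaceMechanism f ε D S
        = ∫⁻ x in S, ENNReal.ofReal ((1 / (2 * b)) * Real.exp (-|x - f D| / b)) := by
      rw [laplaceMechanism, ← hΔ, ← hb]; exact laplace_map_apply b (f D) S hS
    have hR : laplaceMechanism f ε D' S
        = ∫⁻ x in S, ENNReal.ofReal ((1 / (2 * b)) * Real.exp (-|x - f D'| / b)) := by
      rw [laplaceMechanism, ← hΔ, ← hb]; exact laplace_map_apply b (f D') S hS
    rw [hL, hR, ← lintegral_const_mul' _ _ ENNReal.ofReal_ne_top]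
    apply lintegral_mono
    intro x
    simp only
    rw [← ENNReal.ofReal_mul (Real.exp_nonneg ε)]
    apply ENNReal.ofReal_le_ofReal
    have hk : (0:ℝ) ≤ 1 / (2 * b) := by positivity
    rw [show Real.exp ε * ((1 / (2 * b)) * Real.exp (-|x - f D'| / b))
        = (1 / (2 * b)) * (Real.exp ε * Real.exp (-|x - f D'| / b)) by ring,
      ← Real.exp_add]
    apply mul_le_mul_of_nonneg_left _ hk
    apply Real.exp_le_exp.mpr
    have hεb : ε * b = Δ := by
      rw [hb]; field_simp
    have habs : |x - f D'| ≤ |x - f D| + Δ := by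
      calc |x - f D'| = |(x - f D) + (f D - f D')| := by ring_nf
        _ ≤ |x - f D| + |f D - f D'| := abs_add_le _ _
        _ ≤ |x - f D| + Δ := by linarith
    rw [div_le_iff₀ hbpos]
    have hexp : (ε + -|x - f D'| / b) * b = ε * b - |x - f D'| := by
      field_simp
      ring
    rw [hexp, hεb]
    linarith
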